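/- arXiv:1303.5148 — 5 statements merged into one kernel-verified Lean document; each statement's English description precedes it below -/
import Mathlib

section
/- With the notation of the confusion-model setting, let r_i(w) ≥ 0 for w ∈ b_i, let S_i(t) = Σ_{w'∈b_i} q(w'|t), and define Q(μ) = Σ_{i=1}^M Σ_{w∈b_i} r_i(w)·log( p_c(ŵ_i|w)·(Σ_t e^{μ_t} q(w|t)) / (Σ_t e^{μ_t} S_i(t)) ). Then for every δ ∈ ℝ^T, Q(μ+δ) − Q(μ) ≥ Σ_{i=1}^M Σ_{w∈b_i} r_i(w)·[ 1 + (Σ_t e^{μ_t} q(w|t) δ_t)/(Σ_t e^{μ_t} q(w|t)) − (Σ_t e^{μ_t+δ_t} S_i(t))/(Σ_t e^{μ_t} S_i(t)) ]. -/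
open Finset

/-- Jensen's inequality for `log` with positive weights `a`. -/
lemma jensen_log_aux {T : Type*} [Fintype T] [Nonempty T] (a δ : T → ℝ)
    (ha : ∀ t, 0 < a t) :
    (∑ t, a t * δ t) / (∑ t, a t) ≤
      Real.log (∑ t, a t * Real.exp (δ t)) - Real.log (∑ t, a t) := by
  have hA : 0 < ∑ t, a t := Finset.sum_pos (fun t _ => ha t) univ_nonempty
  have hA' : 0 < ∑ t, a t * Real.exp (δ t) :=
    Finset.sum_pos (fun t _ => mul_pos (ha t) (Real.exp_pos _)) univ_nonempty
  rw [← Real.log_div hA'.ne' hA.ne',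
    Real.le_log_iff_exp_le (div_pos hA' hA)]
  have hw : ∑ t, a t / (∑ s, a s) = 1 := by
    rw [← Finset.sum_div]; field_simp
  have hj := (convexOn_exp).map_sum_le (t := (univ : Finset T))
    (w := fun t => a t / (∑ s, a s)) (p := δ)
    (fun t _ => div_nonneg (ha t).le hA.le) hw (fun t _ => Set.mem_univ _)
  calc Real.exp ((∑ t, a t * δ t) / (∑ t, a t))
      = Real.exp (∑ t, (a t / (∑ s, a s)) • δ t) := by
        congr 1
        rw [Finset.sum_div]
        apply Finset.sum_congr rfl; intro t _
        rw [smul_eq_mul]; ring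
    _ ≤ ∑ t, (a t / (∑ s, a s)) • Real.exp (δ t) := hj
    _ = (∑ t, a t * Real.exp (δ t)) / (∑ t, a t) := by
        rw [Finset.sum_div]
        apply Finset.sum_congr rfl; intro t _
        rw [smul_eq_mul]; ring

/-- Lower bound on the `Q`-difference in the confusion model (1-best case):
combining `-log x ≥ 1 - x` on the denominator ratio with Jensen's inequality
on the numerator ratio.  Here `pc v w = p_c(v|w)`, `q w t = q(w|t)`,
`S_i(t) = ∑_{w' ∈ b i} q w' t`, and `r i w ≥ 0` are posterior weights. -/
theorem Q_diff_ge_lower_bound_onebest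
    {V : Type*} [Fintype V] {T : Type*} [Fintype T] [Nonempty T]
    (M : ℕ) (b : Fin M → Finset V) (hb : ∀ i, (b i).Nonempty)
    (what : Fin M → V) (hwhat : ∀ i, what i ∈ b i)
    (pc : V → V → ℝ) (hpc : ∀ v w, 0 < pc v w)
    (q : V → T → ℝ) (hq : ∀ w t, 0 < q w t)
    (r : Fin M → V → ℝ) (hr : ∀ i, ∀ w ∈ b i, 0 ≤ r i w)
    (μ δ : T → ℝ) :
    (∑ i, ∑ w ∈ b i, r i w *
        Real.log (pc (what i) w * (∑ t, Real.exp (μ t + δ t) * q w t) /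
          (∑ t, Real.exp (μ t + δ t) * ∑ w' ∈ b i, q w' t))) -
    (∑ i, ∑ w ∈ b i, r i w *
        Real.log (pc (what i) w * (∑ t, Real.exp (μ t) * q w t) /
          (∑ t, Real.exp (μ t) * ∑ w' ∈ b i, q w' t))) ≥
    ∑ i, ∑ w ∈ b i, r i w *
      (1 + (∑ t, Real.exp (μ t) * q w t * δ t) / (∑ t, Real.exp (μ t) * q w t)
         - (∑ t, Real.exp (μ t + δ t) * ∑ w' ∈ b i, q w' t) /
             (∑ t, Real.exp (μ t) * ∑ w' ∈ b i, q w' t)) := by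
  rw [← Finset.sum_sub_distrib]
  apply Finset.sum_le_sum
  intro i _
  rw [← Finset.sum_sub_distrib]
  apply Finset.sum_le_sum
  intro w hw
  rw [← mul_sub]
  apply mul_le_mul_of_nonneg_left _ (hr i w hw)
  set A : ℝ := ∑ t, Real.exp (μ t) * q w t with hAdef
  set A' : ℝ := ∑ t, Real.exp (μ t + δ t) * q w t with hA'def
  set B : ℝ := ∑ t, Real.exp (μ t) * ∑ w' ∈ b i, q w' t with hBdef
  set B' : ℝ := ∑ t, Real.exp (μ t + δ t) * ∑ w' ∈ b i, q w' t with hB'def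
  have hS : ∀ t, 0 < ∑ w' ∈ b i, q w' t := fun t =>
    Finset.sum_pos (fun w' _ => hq w' t) (hb i)
  have hA : 0 < A := Finset.sum_pos (fun t _ => mul_pos (Real.exp_pos _) (hq w t)) univ_nonempty
  have hA' : 0 < A' := Finset.sum_pos (fun t _ => mul_pos (Real.exp_pos _) (hq w t)) univ_nonempty
  have hB : 0 < B := Finset.sum_pos (fun t _ => mul_pos (Real.exp_pos _) (hS t)) univ_nonempty
  have hB' : 0 < B' := Finset.sum_pos (fun t _ => mul_pos (Real.exp_pos _) (hS t)) univ_nonempty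
  have hp : 0 < pc (what i) w := hpc _ _
  have hlog1 : Real.log (pc (what i) w * A' / B') =
      Real.log (pc (what i) w) + Real.log A' - Real.log B' := by
    rw [Real.log_div (by positivity) hB'.ne', Real.log_mul hp.ne' hA'.ne']
  have hlog2 : Real.log (pc (what i) w * A / B) =
      Real.log (pc (what i) w) + Real.log A - Real.log B := by
    rw [Real.log_div (by positivity) hB.ne', Real.log_mul hp.ne' hA.ne']
  rw [hlog1, hlog2]
  have hA'eq : A' = ∑ t, Real.exp (μ t) * q w t * Real.exp (δ t) := by
    rw [hA'def]
    apply Finset.sum_congr rfl; intro t _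
    rw [Real.exp_add]; ring
  have hJ : (∑ t, Real.exp (μ t) * q w t * δ t) / A ≤ Real.log A' - Real.log A := by
    rw [hA'eq]
    exact jensen_log_aux (fun t => Real.exp (μ t) * q w t) δ
      (fun t => mul_pos (Real.exp_pos _) (hq w t))
  have hlogB : Real.log B' - Real.log B ≤ B' / B - 1 := by
    rw [← Real.log_div hB'.ne' hB.ne']
    exact Real.log_le_sub_one_of_pos (div_pos hB' hB)
  linarith
end

section
/- With the notation of the confusion-model setting, suppose r_i(w) ≥ 0 for all w ∈ b_i and Σ_{w∈b_i} r_i(w) = 1 for every bin i. Let S_i(t) = Σ_{w'∈b_i} q(w'|t), and define g(δ) = Σ_{i=1}^M Σ_{w∈b_i} r_i(w)·[ 1 + (Σ_t e^{μ_t} q(w|t) δ_t)/(Σ_t e^{μ_t} q(w|t)) − (Σ_t e^{μ_t+δ_t} S_i(t))/(Σ_t e^{μ_t} S_i(t)) ]. Set A_t = Σ_{i=1}^M Σ_{w∈b_i} r_i(w)·e^{μ_t} q(w|t)/(Σ_{t'} e^{μ_{t'}} q(w|t')) and B_t = Σ_{i=1}^M S_i(t)/(Σ_{t'} e^{μ_{t'}}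 S_i(t')). If A_t > 0 for every t, then the vector δ* defined by e^{μ_t + δ*_t} = A_t / B_t (i.e., δ*_t = log(A_t/B_t) − μ_t) is a global maximizer of g over ℝ^T. -/
open Finset

/-- The paper's update equation (1-best confusion model): the vector `δ*`
defined by `e^{μ t + δ* t} = A t / B t`, i.e. `δ* t = log (A t / B t) - μ t`,
is a global maximizer over `ℝ^T` of the concave lower bound `g`. -/
theorem update_onebest_maximizes_lower_bound
    {V : Type*} [Fintype V] {T : Type*} [Fintype T] [Nonempty T]
    (M : ℕ) (b : Fin M → Finset V) (hb : ∀ i, (b i).Nonempty)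
    (q : V → T → ℝ) (hq : ∀ w t, 0 < q w t)
    (r : Fin M → V → ℝ) (hr : ∀ i, ∀ w ∈ b i, 0 ≤ r i w)
    (hrsum : ∀ i, ∑ w ∈ b i, r i w = 1)
    (μ : T → ℝ)
    (A B : T → ℝ)
    (hA : ∀ t, A t = ∑ i, ∑ w ∈ b i,
        r i w * (Real.exp (μ t) * q w t) / ∑ t', Real.exp (μ t') * q w t')
    (hB : ∀ t, B t = ∑ i, (∑ w' ∈ b i, q w' t) /
        ∑ t', Real.exp (μ t') * ∑ w' ∈ b i, q w' t')
    (hApos : ∀ t, 0 < A t)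
    (g : (T → ℝ) → ℝ)
    (hg : ∀ δ : T → ℝ, g δ = ∑ i, ∑ w ∈ b i, r i w *
      (1 + (∑ t, Real.exp (μ t) * q w t * δ t) / (∑ t, Real.exp (μ t) * q w t)
         - (∑ t, Real.exp (μ t + δ t) * ∑ w' ∈ b i, q w' t) /
             (∑ t, Real.exp (μ t) * ∑ w' ∈ b i, q w' t))) :
    ∀ δ : T → ℝ, g δ ≤ g (fun t => Real.log (A t / B t) - μ t) := by
  -- M must be positive, otherwise A t = 0
  have hM : 0 < M := by
    by_contra h
    push_neg at h
    interval_cases M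
    have t0 : T := Classical.arbitrary T
    have := hApos t0
    rw [hA t0] at this
    simp at this
  -- B t > 0
  have hBpos : ∀ t, 0 < B t := by
    intro t
    rw [hB t]
    apply Finset.sum_pos
    · intro i _
      apply div_pos
      · exact Finset.sum_pos (fun w hw => (hq w t).le.lt_of_ne' (hq w t).ne') (hb i)
      · apply Finset.sum_pos
        · intro t' _
          exact mul_pos (Real.exp_pos _) (Finset.sum_pos (fun w hw => hq w t') (hb i))
        · exact Finset.univ_nonempty
    · simpa [Finset.univ_nonempty_iff] using Fin.pos_iff_nonempty.mp hM
  -- rewrite g in separable form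
  have key : ∀ δ : T → ℝ, g δ =
      (M : ℝ) + ∑ t, A t * δ t - ∑ t, Real.exp (μ t + δ t) * B t := by
    intro δ
    rw [hg δ]
    have expand : ∀ i : Fin M, ∀ w ∈ b i,
        r i w *
        (1 + (∑ t, Real.exp (μ t) * q w t * δ t) / (∑ t, Real.exp (μ t) * q w t)
           - (∑ t, Real.exp (μ t + δ t) * ∑ w' ∈ b i, q w' t) /
               (∑ t, Real.exp (μ t) * ∑ w' ∈ b i, q w' t)) =
        r i w
        + (∑ t, r i w * (Real.exp (μ t) * q w t) / (∑ t', Real.exp (μ t') * q w t') * δ t)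
        - (∑ t, Real.exp (μ t + δ t) *
             (r i w * ((∑ w' ∈ b i, q w' t) / (∑ t', Real.exp (μ t') * ∑ w' ∈ b i, q w' t')))) := by
      intro i w hw
      have e1 : (∑ t, r i w * (Real.exp (μ t) * q w t) / (∑ t', Real.exp (μ t') * q w t') * δ t)
          = (∑ t, Real.exp (μ t) * q w t * δ t)
              * (r i w / (∑ t', Real.exp (μ t') * q w t')) := by
        rw [Finset.sum_mul]
        exact Finset.sum_congr rfl fun t _ => by ring
      have e2 : (∑ t, Real.exp (μ t + δ t) *
             (r i w * ((∑ w' ∈ b i, q w' t) / (∑ t', Real.exp (μ t') * ∑ w' ∈ b i, q w' t'))))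
          = (∑ t, Real.exp (μ t + δ t) * ∑ w' ∈ b i, q w' t)
              * (r i w / (∑ t', Real.exp (μ t') * ∑ w' ∈ b i, q w' t')) := by
        rw [Finset.sum_mul]
        exact Finset.sum_congr rfl fun t _ => by ring
      rw [e1, e2]
      ring
    rw [Finset.sum_congr rfl (fun i _ => Finset.sum_congr rfl (expand i))]
    simp only [Finset.sum_sub_distrib, Finset.sum_add_distrib]
    congr 1
    · congr 1
      · simp [hrsum]
      · -- linear part
        rw [Finset.sum_congr rfl
            (fun i (_ : i ∈ Finset.univ) => Finset.sum_comm (s := b i) (t := Finset.univ))]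
        rw [Finset.sum_comm]
        apply Finset.sum_congr rfl
        intro t _
        rw [hA t, Finset.sum_mul]
        apply Finset.sum_congr rfl
        intro i _
        rw [Finset.sum_mul]
    · -- exponential part
      rw [Finset.sum_congr rfl
          (fun i (_ : i ∈ Finset.univ) => Finset.sum_comm (s := b i) (t := Finset.univ))]
      rw [Finset.sum_comm]
      apply Finset.sum_congr rfl
      intro t _
      rw [hB t, Finset.mul_sum]
      apply Finset.sum_congr rfl
      intro i _
      have : ∀ w ∈ b i, Real.exp (μ t + δ t) *
            (r i w * ((∑ w' ∈ b i, q w' t) / (∑ t', Real.exp (μ t') * ∑ w' ∈ b i, q w' t')))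
          = r i w * (Real.exp (μ t + δ t) *
              ((∑ w' ∈ b i, q w' t) / (∑ t', Real.exp (μ t') * ∑ w' ∈ b i, q w' t'))) := by
        intro w _; ring
      rw [Finset.sum_congr rfl this, ← Finset.sum_mul, hrsum i, one_mul]
  intro δ
  rw [key δ, key (fun t => Real.log (A t / B t) - μ t)]
  have hpt : ∀ t : T,
      A t * δ t - Real.exp (μ t + δ t) * B t ≤
      A t * (Real.log (A t / B t) - μ t)
        - Real.exp (μ t + (Real.log (A t / B t) - μ t)) * B t := by
    intro t
    set x := δ t
    set s := Real.log (A t / B t) - μ t with hs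
    have hABpos : 0 < A t / B t := div_pos (hApos t) (hBpos t)
    have hexp : Real.exp (μ t + s) = A t / B t := by
      rw [hs]
      rw [show μ t + (Real.log (A t / B t) - μ t) = Real.log (A t / B t) by ring]
      exact Real.exp_log hABpos
    have hBne : B t ≠ 0 := (hBpos t).ne'
    have hexpB : Real.exp (μ t + s) * B t = A t := by
      rw [hexp]; field_simp
    rw [hexpB]
    -- e^{μ+x} = e^{μ+s} * e^{x-s} ≥ (A/B)(1 + (x - s))
    have h1 : 1 + (x - s) ≤ Real.exp (x - s) := by linarith [Real.add_one_le_exp (x - s)]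
    have h2 : Real.exp (μ t + x) = Real.exp (μ t + s) * Real.exp (x - s) := by
      rw [← Real.exp_add]; ring_nf
    have h3 : (A t / B t) * (1 + (x - s)) ≤ Real.exp (μ t + x) := by
      rw [h2, hexp]
      exact mul_le_mul_of_nonneg_left h1 hABpos.le
    have h4 : A t * (1 + (x - s)) ≤ Real.exp (μ t + x) * B t := by
      calc A t * (1 + (x - s)) = (A t / B t) * (1 + (x - s)) * B t := by field_simp
        _ ≤ Real.exp (μ t + x) * B t := by
            exact mul_le_mul_of_nonneg_right h3 (hBpos t).le
    nlinarith [h4]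
  have := Finset.sum_le_sum (fun t (_ : t ∈ Finset.univ) => hpt t)
  simp only [Finset.sum_sub_distrib] at this
  linarith
end

section
/- With the notation of the confusion-model setting, define the log-likelihood L(μ) = Σ_{i=1}^M log( Σ_{w∈b_i} (q_μ(w)/Σ_{w'∈b_i} q_μ(w'))·p_c(ŵ_i|w) ), where q_μ(w) = Σ_t e^{μ_t} q(w|t) / Σ_{t'} e^{μ_{t'}}. Given μ ∈ ℝ^T, let r_i(w) = q_μ(w)·p_c(ŵ_i|w) / Σ_{w'∈b_i} q_μ(w')·p_c(ŵ_i|w') be the bin posteriors, let S_i(t) = Σ_{w'∈b_i} q(w'|t), A_t = Σ_i Σ_{w∈b_i} r_i(w)·e^{μ_t} q(w|t)/(Σ_{t'} e^{μ_{t'}} q(w|t')), B_t = Σ_i S_i(t)/(Σ_{t'} e^{μ_{t'}} S_i(t')), and define the update δ* by e^{μ_t+δ*_t} = A_t/B_t, assuming A_t > 0 for all t. Then L(μ + δ*) ≥ L(μ). -/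
open Finset

/-- Weighted Jensen inequality for `log`. -/
lemma jensen_log_aux_s7 {ι : Type*} (s : Finset ι) (p x : ι → ℝ)
    (hp : ∀ i ∈ s, 0 ≤ p i) (hx : ∀ i ∈ s, 0 < x i)
    (hps : ∑ i ∈ s, p i = 1) :
    ∑ i ∈ s, p i * Real.log (x i) ≤ Real.log (∑ i ∈ s, p i * x i) := by
  have hc : 0 < ∑ i ∈ s, p i * x i := by
    obtain ⟨j, hj, hpj⟩ : ∃ j ∈ s, 0 < p j := by
      by_contra h
      push_neg at h
      have : ∑ i ∈ s, p i ≤ 0 := Finset.sum_nonpos (fun i hi => h i hi)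
      linarith
    exact Finset.sum_pos' (fun i hi => mul_nonneg (hp i hi) (hx i hi).le)
      ⟨j, hj, mul_pos hpj (hx j hj)⟩
  set c := ∑ i ∈ s, p i * x i with hcdef
  have key : ∀ i ∈ s, p i * Real.log (x i) ≤ p i * (Real.log c + (x i / c - 1)) := by
    intro i hi
    apply mul_le_mul_of_nonneg_left _ (hp i hi)
    have h1 : Real.log (x i / c) ≤ x i / c - 1 :=
      Real.log_le_sub_one_of_pos (div_pos (hx i hi) hc)
    rw [Real.log_div (hx i hi).ne' hc.ne'] at h1
    linarith
  calc ∑ i ∈ s, p i * Real.log (x i)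
      ≤ ∑ i ∈ s, p i * (Real.log c + (x i / c - 1)) := Finset.sum_le_sum key
    _ = Real.log c := by
        have expand : ∀ i ∈ s, p i * (Real.log c + (x i / c - 1))
            = p i * Real.log c + p i * x i / c - p i := by
          intro i _; field_simp; ring
        rw [Finset.sum_congr rfl expand]
        rw [Finset.sum_sub_distrib, Finset.sum_add_distrib, ← Finset.sum_mul, hps,
          one_mul, ← Finset.sum_div, ← hcdef, div_self hc.ne']
        ring

lemma aux_div1 (a dd e p : ℝ) (he : e ≠ 0) (hd : dd ≠ 0) :
    a / e / (dd / e) * p = a * p / dd := by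
  field_simp

lemma aux_div2 (a dd e p : ℝ) (he : e ≠ 0) (hd : dd ≠ 0) :
    a / e * p / (dd / e) = a * p / dd := by
  field_simp

/-- Monotonicity of the EM procedure with the confusion model: one update step
`μ ↦ μ + δ*`, with `δ*` given by the paper's update equation
`e^{μ t + δ* t} = A t / B t`, does not decrease the log-likelihood `L`. -/
theorem em_update_increases_loglik
    {V : Type*} [Fintype V] {T : Type*} [Fintype T] [Nonempty T]
    (M : ℕ) (b : Fin M → Finset V) (hb : ∀ i, (b i).Nonempty)
    (what : Fin M → V) (hwhat : ∀ i, what i ∈ b i)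
    (pc : V → V → ℝ) (hpc : ∀ v w, 0 < pc v w)
    (q : V → T → ℝ) (hq : ∀ w t, 0 < q w t)
    (μ : T → ℝ)
    (L : (T → ℝ) → ℝ)
    (hL : ∀ ν : T → ℝ, L ν = ∑ i, Real.log (∑ w ∈ b i,
      (((∑ t, Real.exp (ν t) * q w t) / ∑ t', Real.exp (ν t')) /
        ∑ w' ∈ b i, (∑ t, Real.exp (ν t) * q w' t) / ∑ t', Real.exp (ν t')) *
        pc (what i) w))
    (qmu : V → ℝ)
    (hqmu : ∀ w, qmu w = (∑ t, Real.exp (μ t) * q w t) / ∑ t', Real.exp (μ t'))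
    (r : Fin M → V → ℝ)
    (hr : ∀ i, ∀ w ∈ b i,
      r i w = qmu w * pc (what i) w / ∑ w' ∈ b i, qmu w' * pc (what i) w')
    (A B : T → ℝ)
    (hA : ∀ t, A t = ∑ i, ∑ w ∈ b i,
        r i w * (Real.exp (μ t) * q w t) / ∑ t', Real.exp (μ t') * q w t')
    (hB : ∀ t, B t = ∑ i, (∑ w' ∈ b i, q w' t) /
        ∑ t', Real.exp (μ t') * ∑ w' ∈ b i, q w' t')
    (hApos : ∀ t, 0 < A t)
    (δstar : T → ℝ)
    (hδstar : ∀ t, Real.exp (μ t + δstar t) = A t / B t) :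
    L (fun t => μ t + δstar t) ≥ L μ := by
  classical
  set ν : T → ℝ := fun t => μ t + δstar t with hνdef
  -- basic positivity
  have hEpos : ∀ ρ : T → ℝ, 0 < ∑ t, Real.exp (ρ t) := fun ρ =>
    Finset.sum_pos (fun t _ => Real.exp_pos _) Finset.univ_nonempty
  have hfpos : ∀ (ρ : T → ℝ) (w : V), 0 < ∑ t, Real.exp (ρ t) * q w t := fun ρ w =>
    Finset.sum_pos (fun t _ => mul_pos (Real.exp_pos _) (hq w t)) Finset.univ_nonempty
  set f : (T → ℝ) → V → ℝ := fun ρ w => ∑ t, Real.exp (ρ t) * q w t with hfdef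
  set N : Fin M → (T → ℝ) → ℝ := fun i ρ => ∑ w ∈ b i, f ρ w * pc (what i) w with hNdef
  set D : Fin M → (T → ℝ) → ℝ := fun i ρ => ∑ w ∈ b i, f ρ w with hDdef
  have hNpos : ∀ (i : Fin M) (ρ : T → ℝ), 0 < N i ρ := fun i ρ =>
    Finset.sum_pos (fun w _ => mul_pos (hfpos ρ w) (hpc _ w)) (hb i)
  have hDpos : ∀ (i : Fin M) (ρ : T → ℝ), 0 < D i ρ := fun i ρ =>
    Finset.sum_pos (fun w _ => hfpos ρ w) (hb i)
  -- simplify L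
  have hL' : ∀ ρ : T → ℝ, L ρ = ∑ i, (Real.log (N i ρ) - Real.log (D i ρ)) := by
    intro ρ
    rw [hL]
    refine Finset.sum_congr rfl fun i _ => ?_
    have h1 : ∑ w' ∈ b i, (∑ t, Real.exp (ρ t) * q w' t) / (∑ t', Real.exp (ρ t'))
        = D i ρ / (∑ t', Real.exp (ρ t')) := (Finset.sum_div _ _ _).symm
    simp only [h1]
    have h2 : ∑ w ∈ b i, ((∑ t, Real.exp (ρ t) * q w t) / (∑ t', Real.exp (ρ t')) /
        (D i ρ / (∑ t', Real.exp (ρ t')))) * pc (what i) w = N i ρ / D i ρ := by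
      rw [show N i ρ / D i ρ = ∑ w ∈ b i, f ρ w * pc (what i) w / D i ρ from
        Finset.sum_div _ _ _]
      exact Finset.sum_congr rfl fun w _ =>
        aux_div1 _ _ _ _ (hEpos ρ).ne' (hDpos i ρ).ne'
    rw [h2, Real.log_div (hNpos i ρ).ne' (hDpos i ρ).ne']
  -- r facts
  have hrval : ∀ i, ∀ w ∈ b i, r i w = f μ w * pc (what i) w / N i μ := by
    intro i w hw
    rw [hr i w hw]
    have hden : ∑ w' ∈ b i, qmu w' * pc (what i) w'
        = N i μ / (∑ t', Real.exp (μ t')) := by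
      rw [show N i μ / (∑ t', Real.exp (μ t'))
          = ∑ w' ∈ b i, f μ w' * pc (what i) w' / (∑ t', Real.exp (μ t')) from
        Finset.sum_div _ _ _]
      refine Finset.sum_congr rfl fun w' _ => ?_
      rw [hqmu w', div_mul_eq_mul_div]
    rw [hden, hqmu w]
    exact aux_div2 _ _ _ _ (hEpos μ).ne' (hNpos i μ).ne'
  have hrpos : ∀ i, ∀ w ∈ b i, 0 < r i w := by
    intro i w hw
    rw [hrval i w hw]
    exact div_pos (mul_pos (hfpos μ w) (hpc _ w)) (hNpos i μ)
  have hrsum : ∀ i, ∑ w ∈ b i, r i w = 1 := by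
    intro i
    rw [Finset.sum_congr rfl (hrval i), ← Finset.sum_div]
    exact div_self (hNpos i μ).ne'
  -- per-bin Jensen (numerator)
  have step1 : ∀ i : Fin M, ∑ w ∈ b i, r i w * Real.log (f ν w / f μ w)
      ≤ Real.log (N i ν) - Real.log (N i μ) := by
    intro i
    have hJ := jensen_log_aux_s7 (b i) (r i) (fun w => f ν w / f μ w)
      (fun w hw => (hrpos i w hw).le)
      (fun w _ => div_pos (hfpos ν w) (hfpos μ w)) (hrsum i)
    have hsum : ∑ w ∈ b i, r i w * (f ν w / f μ w) = N i ν / N i μ := by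
      rw [show N i ν / N i μ = ∑ w ∈ b i, f ν w * pc (what i) w / N i μ from
        Finset.sum_div _ _ _]
      refine Finset.sum_congr rfl fun w hw => ?_
      rw [hrval i w hw]
      field_simp [(hfpos μ w).ne', (hNpos i μ).ne']
      have hne : f μ w ≠ 0 := (hfpos μ w).ne'
      rw [mul_assoc, mul_div_cancel_left₀ _ hne]
    rw [hsum, Real.log_div (hNpos i ν).ne' (hNpos i μ).ne'] at hJ
    exact hJ
  -- per-word Jensen (topics)
  have step2 : ∀ w : V, ∑ t, (Real.exp (μ t) * q w t / f μ w) * δstar t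
      ≤ Real.log (f ν w / f μ w) := by
    intro w
    have hpsum : ∑ t, Real.exp (μ t) * q w t / f μ w = 1 := by
      rw [← Finset.sum_div]
      exact div_self (hfpos μ w).ne'
    have hJ := jensen_log_aux_s7 Finset.univ
      (fun t => Real.exp (μ t) * q w t / f μ w)
      (fun t => Real.exp (δstar t))
      (fun t _ => (div_pos (mul_pos (Real.exp_pos _) (hq w t)) (hfpos μ w)).le)
      (fun t _ => Real.exp_pos _) hpsum
    simp only [Real.log_exp] at hJ
    have hsum : ∑ t, (Real.exp (μ t) * q w t / f μ w) * Real.exp (δstar t)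
        = f ν w / f μ w := by
      rw [show f ν w / f μ w = ∑ t, Real.exp (ν t) * q w t / f μ w from
        Finset.sum_div _ _ _]
      refine Finset.sum_congr rfl fun t _ => ?_
      show Real.exp (μ t) * q w t / f μ w * Real.exp (δstar t)
          = Real.exp (μ t + δstar t) * q w t / f μ w
      rw [Real.exp_add]
      ring
    rw [hsum] at hJ
    exact hJ
  -- numerator total
  have tot1 : ∑ t, δstar t * A t
      ≤ ∑ i, (Real.log (N i ν) - Real.log (N i μ)) := by
    have h1 : ∑ i, ∑ w ∈ b i, r i w * Real.log (f ν w / f μ w)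
        ≤ ∑ i, (Real.log (N i ν) - Real.log (N i μ)) :=
      Finset.sum_le_sum fun i _ => step1 i
    have h3 : ∑ t, δstar t * A t
        = ∑ i, ∑ w ∈ b i, r i w * ∑ t, (Real.exp (μ t) * q w t / f μ w) * δstar t := by
      have e2 : ∑ t, δstar t * A t
          = ∑ t, ∑ i, ∑ w ∈ b i, δstar t *
            (r i w * (Real.exp (μ t) * q w t) / (∑ t', Real.exp (μ t') * q w t')) := by
        refine Finset.sum_congr rfl fun t _ => ?_
        rw [hA t, Finset.mul_sum]
        exact Finset.sum_congr rfl fun i _ => Finset.mul_sum _ _ _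
      rw [e2, Finset.sum_comm]
      refine Finset.sum_congr rfl fun i _ => ?_
      rw [Finset.sum_comm]
      refine Finset.sum_congr rfl fun w _ => ?_
      rw [Finset.mul_sum]
      refine Finset.sum_congr rfl fun t _ => ?_
      show δstar t * (r i w * (Real.exp (μ t) * q w t) / f μ w)
          = r i w * (Real.exp (μ t) * q w t / f μ w * δstar t)
      ring
    have h2 : ∑ t, δstar t * A t
        ≤ ∑ i, ∑ w ∈ b i, r i w * Real.log (f ν w / f μ w) := by
      rw [h3]
      refine Finset.sum_le_sum fun i _ => Finset.sum_le_sum fun w hw => ?_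
      exact mul_le_mul_of_nonneg_left (step2 w) (hrpos i w hw).le
    linarith
  -- denominator facts
  have hDswap : ∀ (i : Fin M) (ρ : T → ℝ),
      D i ρ = ∑ t, Real.exp (ρ t) * ∑ w ∈ b i, q w t := by
    intro i ρ
    show ∑ w ∈ b i, (∑ t, Real.exp (ρ t) * q w t) = _
    rw [Finset.sum_comm]
    exact Finset.sum_congr rfl fun t _ => (Finset.mul_sum _ _ _).symm
  have hBval : ∀ t, B t = ∑ i, (∑ w ∈ b i, q w t) / D i μ := by
    intro t
    rw [hB]
    exact Finset.sum_congr rfl fun i _ => by rw [hDswap i μ]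
  have hBpos : ∀ t, 0 < B t := by
    intro t
    by_contra h
    push_neg at h
    have h2 := hδstar t
    have h3 : A t / B t ≤ 0 := div_nonpos_of_nonneg_of_nonpos (hApos t).le h
    linarith [Real.exp_pos (μ t + δstar t), h2 ▸ h3]
  have hAB : ∀ t, Real.exp (ν t) * B t = A t := by
    intro t
    show Real.exp (μ t + δstar t) * B t = A t
    rw [hδstar t, div_mul_cancel₀ _ (hBpos t).ne']
  -- Σ A = M
  have hsumA : ∑ t, A t = (M : ℝ) := by
    have h1 : ∑ t, A t = ∑ i, ∑ w ∈ b i, r i w := by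
      simp only [hA]
      rw [Finset.sum_comm]
      refine Finset.sum_congr rfl fun i _ => ?_
      rw [Finset.sum_comm]
      refine Finset.sum_congr rfl fun w _ => ?_
      rw [← Finset.sum_div, ← Finset.mul_sum]
      exact mul_div_cancel_right₀ _ (hfpos μ w).ne'
    rw [h1, Finset.sum_congr rfl fun i _ => hrsum i]
    simp
  -- Σ e^μ B = M
  have hsumEB : ∑ t, Real.exp (μ t) * B t = (M : ℝ) := by
    have h1 : ∑ t, Real.exp (μ t) * B t = ∑ i, D i μ / D i μ := by
      simp only [hBval, Finset.mul_sum]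
      rw [Finset.sum_comm]
      refine Finset.sum_congr rfl fun i _ => ?_
      have hmd : ∀ t : T, Real.exp (μ t) * ((∑ w ∈ b i, q w t) / D i μ)
          = (Real.exp (μ t) * ∑ w ∈ b i, q w t) / D i μ := fun t => by
        rw [mul_div_assoc]
      rw [Finset.sum_congr rfl fun t _ => hmd t, ← Finset.sum_div, ← hDswap i μ]
    rw [h1, Finset.sum_congr rfl fun i _ => div_self (hDpos i μ).ne']
    simp
  -- denominator total
  have tot2 : (M : ℝ) - ∑ t, Real.exp (ν t) * B t
      ≤ ∑ i, (Real.log (D i μ) - Real.log (D i ν)) := by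
    have step3 : ∀ i : Fin M, 1 - D i ν / D i μ
        ≤ Real.log (D i μ) - Real.log (D i ν) := by
      intro i
      have h1 := Real.log_le_sub_one_of_pos (div_pos (hDpos i ν) (hDpos i μ))
      rw [Real.log_div (hDpos i ν).ne' (hDpos i μ).ne'] at h1
      linarith
    have h2 : ∑ i, (1 - D i ν / D i μ) = (M : ℝ) - ∑ t, Real.exp (ν t) * B t := by
      rw [Finset.sum_sub_distrib, Finset.sum_const, Finset.card_univ,
        Fintype.card_fin, nsmul_eq_mul, mul_one]
      congr 1
      have h3 : ∑ i, D i ν / D i μ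
          = ∑ i, ∑ t, (Real.exp (ν t) * ∑ w ∈ b i, q w t) / D i μ := by
        refine Finset.sum_congr rfl fun i _ => ?_
        rw [hDswap i ν, Finset.sum_div]
      rw [h3, Finset.sum_comm]
      refine Finset.sum_congr rfl fun t _ => ?_
      rw [hBval t, Finset.mul_sum]
      exact Finset.sum_congr rfl fun i _ => by rw [mul_div_assoc]
    calc (M : ℝ) - ∑ t, Real.exp (ν t) * B t = ∑ i, (1 - D i ν / D i μ) := h2.symm
      _ ≤ _ := Finset.sum_le_sum fun i _ => step3 i
  -- final surrogate nonnegativity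
  have final : 0 ≤ ∑ t, δstar t * A t + ((M : ℝ) - ∑ t, Real.exp (ν t) * B t) := by
    have hEB : ∑ t, Real.exp (ν t) * B t = ∑ t, A t :=
      Finset.sum_congr rfl fun t _ => hAB t
    have h2 : ∀ t, A t - Real.exp (μ t) * B t ≤ δstar t * A t := by
      intro t
      have hmb : 0 < Real.exp (μ t) * B t := mul_pos (Real.exp_pos _) (hBpos t)
      have hδ : δstar t = Real.log (A t / (Real.exp (μ t) * B t)) := by
        have hl := congrArg Real.log (hδstar t)
        rw [Real.log_exp, Real.log_div (hApos t).ne' (hBpos t).ne'] at hl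
        rw [Real.log_div (hApos t).ne' hmb.ne', Real.log_mul (Real.exp_pos _).ne'
          (hBpos t).ne', Real.log_exp]
        linarith
      have h3 : 1 - (Real.exp (μ t) * B t) / A t
          ≤ Real.log (A t / (Real.exp (μ t) * B t)) := by
        have h4 := Real.log_le_sub_one_of_pos (div_pos hmb (hApos t))
        rw [Real.log_div hmb.ne' (hApos t).ne'] at h4
        rw [Real.log_div (hApos t).ne' hmb.ne']
        linarith
      have h5 := mul_le_mul_of_nonneg_right h3 (hApos t).le
      have h6 : (1 - (Real.exp (μ t) * B t) / A t) * A t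
          = A t - Real.exp (μ t) * B t := by
        rw [sub_mul, one_mul, div_mul_cancel₀ _ (hApos t).ne']
      rw [hδ]
      rw [h6] at h5
      exact h5
    have h7 : ∑ t, (A t - Real.exp (μ t) * B t) ≤ ∑ t, δstar t * A t :=
      Finset.sum_le_sum fun t _ => h2 t
    rw [Finset.sum_sub_distrib, hsumA, hsumEB] at h7
    rw [hEB, hsumA]
    linarith
  -- assemble
  rw [hL' ν, hL' μ, ge_iff_le, ← sub_nonneg]
  have e1 : ∑ i, (Real.log (N i ν) - Real.log (D i ν))
      - ∑ i, (Real.log (N i μ) - Real.log (D i μ))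
      = ∑ i, (Real.log (N i ν) - Real.log (N i μ))
        + ∑ i, (Real.log (D i μ) - Real.log (D i ν)) := by
    rw [← Finset.sum_add_distrib, ← Finset.sum_sub_distrib]
    exact Finset.sum_congr rfl fun i _ => by ring
  rw [e1]
  linarith [tot1, tot2, final]
end

section
/- With the notation of the confusion-model setting, suppose s_i(w') ≥ 0 with Σ_{w'∈b_i} s_i(w') = 1 and r_i(w|w') ≥ 0 with Σ_{w∈b_i} r_i(w|w') = 1 for every i and w' ∈ b_i. Let S_i(t) = Σ_{w'∈b_i} q(w'|t), and define g(δ) = Σ_{i=1}^M Σ_{w,w'∈b_i} r_i(w|w')·s_i(w')·[ 1 + (Σ_t e^{μ_t} q(w|t) δ_t)/(Σ_t e^{μ_t} q(w|t)) − (Σ_t e^{μ_t+δ_t} S_i(t))/(Σ_t e^{μ_t} S_i(t)) ]. Set A_t = Σ_i Σ_{w,w'∈b_i} r_i(w|w')·s_i(w')·e^{μ_t} q(w|t)/(Σ_{t'} e^{μ_{t'}} q(w|t')) and B_t = Σ_i S_i(t)/(Σ_{t'} e^{μ_{t'}} S_i(t')). If A_t > 0 for every t, then the vector δ* defined by e^{μ_t+δ*_t}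 = A_t/B_t is a global maximizer of g over ℝ^T. -/
open Finset

lemma key_pointwise (a b m x : ℝ) (ha : 0 < a) (hb : 0 < b) :
    a * x - b * Real.exp (m + x) ≤
      a * (Real.log (a / b) - m) - b * Real.exp (m + (Real.log (a / b) - m)) := by
  have hab : 0 < a / b := div_pos ha hb
  have h1 : Real.exp (m + (Real.log (a / b) - m)) = a / b := by
    rw [show m + (Real.log (a / b) - m) = Real.log (a / b) by ring, Real.exp_log hab]
  rw [h1]
  have h2 : b * (a / b) = a := by field_simp
  have h3 : (m + x - Real.log (a / b)) + 1 ≤ Real.exp (m + x - Real.log (a / b)) :=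
    Real.add_one_le_exp _
  have h4 : Real.exp (m + x) = (a / b) * Real.exp (m + x - Real.log (a / b)) := by
    rw [Real.exp_sub, Real.exp_log hab]; field_simp
  rw [h4, h2]
  have h5 : b * ((a / b) * Real.exp (m + x - Real.log (a / b)))
      = a * Real.exp (m + x - Real.log (a / b)) := by
    field_simp
  rw [h5]
  nlinarith [mul_le_mul_of_nonneg_left h3 ha.le]

lemma sum4_comm {V T : Type*} [Fintype T] {M : ℕ} (b : Fin M → Finset V)
    (f : Fin M → V → V → T → ℝ) :
    ∑ i, ∑ w ∈ b i, ∑ w' ∈ b i, ∑ t, f i w w' t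
      = ∑ t, ∑ i, ∑ w ∈ b i, ∑ w' ∈ b i, f i w w' t := by
  calc ∑ i, ∑ w ∈ b i, ∑ w' ∈ b i, ∑ t, f i w w' t
      = ∑ i, ∑ t, ∑ w ∈ b i, ∑ w' ∈ b i, f i w w' t := by
        refine Finset.sum_congr rfl fun i _ => ?_
        calc ∑ w ∈ b i, ∑ w' ∈ b i, ∑ t, f i w w' t
            = ∑ w ∈ b i, ∑ t, ∑ w' ∈ b i, f i w w' t :=
              Finset.sum_congr rfl fun w _ => Finset.sum_comm ..
          _ = ∑ t, ∑ w ∈ b i, ∑ w' ∈ b i, f i w w' t := Finset.sum_comm ..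
    _ = ∑ t, ∑ i, ∑ w ∈ b i, ∑ w' ∈ b i, f i w w' t := Finset.sum_comm ..

/-- The paper's update equation for the topic weights under the
expected-counts confusion model: the vector `δ*` defined by
`e^{μ t + δ* t} = A t / B t` is a global maximizer over `ℝ^T` of the concave
lower bound `g`. -/
theorem update_expected_counts_maximizes_lower_bound
    {V : Type*} [Fintype V] {T : Type*} [Fintype T] [Nonempty T]
    (M : ℕ) (b : Fin M → Finset V) (hb : ∀ i, (b i).Nonempty)
    (q : V → T → ℝ) (hq : ∀ w t, 0 < q w t)
    (s : Fin M → V → ℝ) (hs : ∀ i, ∀ w' ∈ b i, 0 ≤ s i w')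
    (hssum : ∀ i, ∑ w' ∈ b i, s i w' = 1)
    (r : Fin M → V → V → ℝ) (hr : ∀ i, ∀ w ∈ b i, ∀ w' ∈ b i, 0 ≤ r i w w')
    (hrsum : ∀ i, ∀ w' ∈ b i, ∑ w ∈ b i, r i w w' = 1)
    (μ : T → ℝ)
    (A B : T → ℝ)
    (hA : ∀ t, A t = ∑ i, ∑ w ∈ b i, ∑ w' ∈ b i,
        r i w w' * s i w' * (Real.exp (μ t) * q w t) /
          ∑ t', Real.exp (μ t') * q w t')
    (hB : ∀ t, B t = ∑ i, (∑ w' ∈ b i, q w' t) /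
        ∑ t', Real.exp (μ t') * ∑ w' ∈ b i, q w' t')
    (hApos : ∀ t, 0 < A t)
    (g : (T → ℝ) → ℝ)
    (hg : ∀ δ : T → ℝ, g δ = ∑ i, ∑ w ∈ b i, ∑ w' ∈ b i, r i w w' * s i w' *
      (1 + (∑ t, Real.exp (μ t) * q w t * δ t) / (∑ t, Real.exp (μ t) * q w t)
         - (∑ t, Real.exp (μ t + δ t) * ∑ w'' ∈ b i, q w'' t) /
             (∑ t, Real.exp (μ t) * ∑ w'' ∈ b i, q w'' t))) :
    ∀ δ : T → ℝ, g δ ≤ g (fun t => Real.log (A t / B t) - μ t) := by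
  classical
  have hSpos : ∀ (i : Fin M) (t : T), 0 < ∑ w' ∈ b i, q w' t :=
    fun i t => Finset.sum_pos (fun w _ => hq w t) (hb i)
  have hDipos : ∀ i : Fin M, 0 < ∑ t', Real.exp (μ t') * ∑ w' ∈ b i, q w' t' :=
    fun i => Finset.sum_pos (fun t _ => mul_pos (Real.exp_pos _) (hSpos i t))
      Finset.univ_nonempty
  have hMpos : 0 < M := by
    by_contra h
    push_neg at h
    interval_cases M
    have := hApos (Classical.arbitrary T)
    rw [hA] at this
    simp at this
  have hBpos : ∀ t, 0 < B t := by
    intro t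
    rw [hB]
    refine Finset.sum_pos (fun i _ => div_pos (hSpos i t) (hDipos i)) ?_
    rw [Finset.univ_nonempty_iff]
    exact Fin.pos_iff_nonempty.mp hMpos
  -- per-bin normalization
  have hrs1 : ∀ i : Fin M, ∑ w ∈ b i, ∑ w' ∈ b i, r i w w' * s i w' = 1 := by
    intro i
    rw [Finset.sum_comm]
    calc ∑ w' ∈ b i, ∑ w ∈ b i, r i w w' * s i w'
        = ∑ w' ∈ b i, (∑ w ∈ b i, r i w w') * s i w' := by
          refine Finset.sum_congr rfl fun w' _ => ?_
          rw [Finset.sum_mul]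
      _ = ∑ w' ∈ b i, s i w' :=
          Finset.sum_congr rfl (fun w' hw' => by rw [hrsum i w' hw', one_mul])
      _ = 1 := hssum i
  -- the structural rewrite of g
  have hgrw : ∀ δ : T → ℝ,
      g δ = (M : ℝ) + ∑ t, (A t * δ t - B t * Real.exp (μ t + δ t)) := by
    intro δ
    rw [hg]
    have step1 : ∀ i : Fin M, ∀ w ∈ b i, ∀ w' ∈ b i,
        r i w w' * s i w' *
          (1 + (∑ t, Real.exp (μ t) * q w t * δ t) / (∑ t, Real.exp (μ t) * q w t)
             - (∑ t, Real.exp (μ t + δ t) * ∑ w'' ∈ b i, q w'' t) /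
                 (∑ t, Real.exp (μ t) * ∑ w'' ∈ b i, q w'' t))
        = r i w w' * s i w'
          + ∑ t, r i w w' * s i w' * (Real.exp (μ t) * q w t) /
              (∑ t', Real.exp (μ t') * q w t') * δ t
          - ∑ t, r i w w' * s i w' *
              ((∑ w'' ∈ b i, q w'' t) /
                (∑ t', Real.exp (μ t') * ∑ w'' ∈ b i, q w'' t') *
                  Real.exp (μ t + δ t)) := by
      intro i w hw w' hw'
      have hX : r i w w' * s i w' *
            ((∑ t, Real.exp (μ t) * q w t * δ t) / (∑ t, Real.exp (μ t) * q w t))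
          = ∑ t, r i w w' * s i w' * (Real.exp (μ t) * q w t) /
              (∑ t', Real.exp (μ t') * q w t') * δ t := by
        rw [Finset.sum_div, Finset.mul_sum]
        refine Finset.sum_congr rfl fun t _ => ?_
        ring
      have hY : r i w w' * s i w' *
            ((∑ t, Real.exp (μ t + δ t) * ∑ w'' ∈ b i, q w'' t) /
              (∑ t, Real.exp (μ t) * ∑ w'' ∈ b i, q w'' t))
          = ∑ t, r i w w' * s i w' *
              ((∑ w'' ∈ b i, q w'' t) /
                (∑ t', Real.exp (μ t') * ∑ w'' ∈ b i, q w'' t') *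
                  Real.exp (μ t + δ t)) := by
        rw [Finset.sum_div, Finset.mul_sum]
        refine Finset.sum_congr rfl fun t _ => ?_
        ring
      rw [mul_sub, mul_add, mul_one, hX, hY]
    calc (∑ i, ∑ w ∈ b i, ∑ w' ∈ b i, r i w w' * s i w' *
          (1 + (∑ t, Real.exp (μ t) * q w t * δ t) / (∑ t, Real.exp (μ t) * q w t)
             - (∑ t, Real.exp (μ t + δ t) * ∑ w'' ∈ b i, q w'' t) /
                 (∑ t, Real.exp (μ t) * ∑ w'' ∈ b i, q w'' t)))
        = ∑ i, ∑ w ∈ b i, ∑ w' ∈ b i,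
            (r i w w' * s i w'
              + ∑ t, r i w w' * s i w' * (Real.exp (μ t) * q w t) /
                  (∑ t', Real.exp (μ t') * q w t') * δ t
              - ∑ t, r i w w' * s i w' *
                  ((∑ w'' ∈ b i, q w'' t) /
                    (∑ t', Real.exp (μ t') * ∑ w'' ∈ b i, q w'' t') *
                      Real.exp (μ t + δ t))) := by
          refine Finset.sum_congr rfl fun i _ => ?_
          refine Finset.sum_congr rfl fun w hw => ?_
          refine Finset.sum_congr rfl fun w' hw' => ?_
          exact step1 i w hw w' hw'
      _ = (∑ i, ∑ w ∈ b i, ∑ w' ∈ b i, r i w w' * s i w')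
          + (∑ i, ∑ w ∈ b i, ∑ w' ∈ b i,
              ∑ t, r i w w' * s i w' * (Real.exp (μ t) * q w t) /
                (∑ t', Real.exp (μ t') * q w t') * δ t)
          - (∑ i, ∑ w ∈ b i, ∑ w' ∈ b i,
              ∑ t, r i w w' * s i w' *
                ((∑ w'' ∈ b i, q w'' t) /
                  (∑ t', Real.exp (μ t') * ∑ w'' ∈ b i, q w'' t') *
                    Real.exp (μ t + δ t))) := by
          simp only [Finset.sum_add_distrib, Finset.sum_sub_distrib]
      _ = (M : ℝ) + (∑ t, A t * δ t) - ∑ t, B t * Real.exp (μ t + δ t) := by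
          congr 1
          · congr 1
            · -- constant part
              calc ∑ i, ∑ w ∈ b i, ∑ w' ∈ b i, r i w w' * s i w'
                  = ∑ i : Fin M, (1 : ℝ) := Finset.sum_congr rfl fun i _ => hrs1 i
                _ = (M : ℝ) := by simp
            · -- linear part
              calc (∑ i, ∑ w ∈ b i, ∑ w' ∈ b i,
                    ∑ t, r i w w' * s i w' * (Real.exp (μ t) * q w t) /
                      (∑ t', Real.exp (μ t') * q w t') * δ t)
                  = ∑ t, ∑ i, ∑ w ∈ b i, ∑ w' ∈ b i,
                      r i w w' * s i w' * (Real.exp (μ t) * q w t) /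
                        (∑ t', Real.exp (μ t') * q w t') * δ t := by
                    exact sum4_comm b _
                _ = ∑ t, A t * δ t := by
                    refine Finset.sum_congr rfl fun t _ => ?_
                    rw [hA]
                    simp only [Finset.sum_mul]
          · -- exponential part
            calc (∑ i, ∑ w ∈ b i, ∑ w' ∈ b i,
                  ∑ t, r i w w' * s i w' *
                    ((∑ w'' ∈ b i, q w'' t) /
                      (∑ t', Real.exp (μ t') * ∑ w'' ∈ b i, q w'' t') *
                        Real.exp (μ t + δ t)))
                = ∑ t, ∑ i, ∑ w ∈ b i, ∑ w' ∈ b i,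
                    r i w w' * s i w' *
                      ((∑ w'' ∈ b i, q w'' t) /
                        (∑ t', Real.exp (μ t') * ∑ w'' ∈ b i, q w'' t') *
                          Real.exp (μ t + δ t)) := by
                  exact sum4_comm b _
              _ = ∑ t, B t * Real.exp (μ t + δ t) := by
                  refine Finset.sum_congr rfl fun t _ => ?_
                  rw [hB, Finset.sum_mul]
                  refine Finset.sum_congr rfl fun i _ => ?_
                  have : (∑ w ∈ b i, ∑ w' ∈ b i, r i w w' * s i w' *
                      ((∑ w'' ∈ b i, q w'' t) /
                        (∑ t', Real.exp (μ t') * ∑ w'' ∈ b i, q w'' t') *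
                          Real.exp (μ t + δ t)))
                      = (∑ w ∈ b i, ∑ w' ∈ b i, r i w w' * s i w') *
                        ((∑ w'' ∈ b i, q w'' t) /
                          (∑ t', Real.exp (μ t') * ∑ w'' ∈ b i, q w'' t') *
                            Real.exp (μ t + δ t)) := by
                    simp only [Finset.sum_mul]
                  rw [this, hrs1 i, one_mul]
    rw [Finset.sum_sub_distrib]
    ring
  intro δ
  rw [hgrw δ, hgrw (fun t => Real.log (A t / B t) - μ t)]
  refine add_le_add (le_refl _) (Finset.sum_le_sum fun t _ => ?_)
  exact key_pointwise (A t) (B t) (μ t) (δ t) (hApos t) (hBpos t)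
end

section
/- With the notation of the confusion-model setting, suppose r_i(w) ≥ 0 with Σ_{w∈b_i} r_i(w) = 1 for every bin i, let κ = β(α−1) with β > 0 and α < 1 (so κ < 0), let λ_t^{(j)} = e^{μ_t}/Σ_{t'} e^{μ_{t'}}, S_i(t) = Σ_{w'∈b_i} q(w'|t), A_t = Σ_i Σ_{w∈b_i} r_i(w)·e^{μ_t} q(w|t)/(Σ_{t'} e^{μ_{t'}} q(w|t')), and B_t = Σ_i S_i(t)/(Σ_{t'} e^{μ_{t'}} S_i(t')). Define g_MAP(δ) = Σ_i Σ_{w∈b_i} r_i(w)·[1 + (Σ_t e^{μ_t} q(w|t) δ_t)/(Σ_t e^{μ_t} q(w|t)) − (Σ_t e^{μ_t+δ_t} S_i(t))/(Σ_t e^{μ_t} S_i(t))] + κ·[Σ_t δ_t − T·Σ_t λ_t^{(j)} δ_t]. If A_t + κ·(1 − T·λ_t^{(j)}) > 0 for every t, then the vector δ* defined by e^{μ_t+δ*_t} = (A_t + κ·(1 − T·λ_t^{(j)}))/B_t is a global maximizer of g_MAP over ℝ^T. -/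
open Finset

/-- The paper's MAP update equation for `α < 1`: the surrogate objective
`g_MAP`, obtained by adding the linearized Dirichlet prior bound
`κ (∑ δ t - T ∑ λ^{(j)} t * δ t)` (with `κ = β (α - 1) < 0`) to the concave
lower bound on the `Q`-difference, is globally maximized over `ℝ^T` at the
vector `δ*` defined by `e^{μ t + δ* t} = (A t + κ (1 - T λ^{(j)} t)) / B t`. -/
theorem map_update_alpha_lt_one_maximizes
    {V : Type*} [Fintype V] {T : Type*} [Fintype T] [Nonempty T]
    (M : ℕ) (b : Fin M → Finset V) (hb : ∀ i, (b i).Nonempty)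
    (q : V → T → ℝ) (hq : ∀ w t, 0 < q w t)
    (r : Fin M → V → ℝ) (hr : ∀ i, ∀ w ∈ b i, 0 ≤ r i w)
    (hrsum : ∀ i, ∑ w ∈ b i, r i w = 1)
    (β α κ : ℝ) (hβ : 0 < β) (hα : α < 1) (hκ : κ = β * (α - 1))
    (μ : T → ℝ)
    (lamj : T → ℝ) (hlamj : ∀ t, lamj t = Real.exp (μ t) / ∑ t', Real.exp (μ t'))
    (A B : T → ℝ)
    (hA : ∀ t, A t = ∑ i, ∑ w ∈ b i,
        r i w * (Real.exp (μ t) * q w t) / ∑ t', Real.exp (μ t') * q w t')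
    (hB : ∀ t, B t = ∑ i, (∑ w' ∈ b i, q w' t) /
        ∑ t', Real.exp (μ t') * ∑ w' ∈ b i, q w' t')
    (hpos : ∀ t, 0 < A t + κ * (1 - (Fintype.card T : ℝ) * lamj t))
    (gMAP : (T → ℝ) → ℝ)
    (hg : ∀ δ : T → ℝ, gMAP δ =
      (∑ i, ∑ w ∈ b i, r i w *
        (1 + (∑ t, Real.exp (μ t) * q w t * δ t) / (∑ t, Real.exp (μ t) * q w t)
           - (∑ t, Real.exp (μ t + δ t) * ∑ w' ∈ b i, q w' t) /
               (∑ t, Real.exp (μ t) * ∑ w' ∈ b i, q w' t))) +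
      κ * (∑ t, δ t - (Fintype.card T : ℝ) * ∑ t, lamj t * δ t)) :
    ∀ δ : T → ℝ, gMAP δ ≤ gMAP (fun t =>
      Real.log ((A t + κ * (1 - (Fintype.card T : ℝ) * lamj t)) / B t) - μ t) := by
  intro δ
  set n : ℝ := (Fintype.card T : ℝ) with hn
  set C : T → ℝ := fun t => A t + κ * (1 - n * lamj t) with hCdef
  have hκneg : κ < 0 := by
    rw [hκ]
    exact mul_neg_of_pos_of_neg hβ (by linarith)
  have hsumexp : 0 < ∑ t' : T, Real.exp (μ t') :=
    Finset.sum_pos (fun t' _ => Real.exp_pos _) Finset.univ_nonempty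
  have hlamsum : ∑ t, lamj t = 1 := by
    simp only [hlamj]
    rw [← Finset.sum_div, div_self hsumexp.ne']
  have hM : 0 < M := by
    by_contra hM0
    have hM0 : M = 0 := by omega
    subst hM0
    have hAz : ∀ t, A t = 0 := by
      intro t; rw [hA]; simp
    have hneg : ∀ t : T, 1 - n * lamj t < 0 := by
      intro t
      have := hpos t
      rw [hAz t, zero_add] at this
      nlinarith [this]
    have : ∑ t : T, (1 - n * lamj t) < 0 :=
      Finset.sum_neg (fun t _ => hneg t) Finset.univ_nonempty
    rw [Finset.sum_sub_distrib, ← Finset.mul_sum, hlamsum, mul_one] at this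
    simp [hn] at this
  have hbM : (Finset.univ : Finset (Fin M)).Nonempty := by
    simp [Finset.univ_nonempty_iff]
    exact Fin.pos_iff_nonempty.mp hM
  have hBpos : ∀ t, 0 < B t := by
    intro t
    rw [hB]
    apply Finset.sum_pos
    · intro i _
      apply div_pos
      · exact Finset.sum_pos (fun w _ => hq w t) (hb i)
      · apply Finset.sum_pos
        · intro t' _
          exact mul_pos (Real.exp_pos _) (Finset.sum_pos (fun w _ => hq w t') (hb i))
        · exact Finset.univ_nonempty
    · exact hbM
  have key : ∀ d : T → ℝ, gMAP d
      = (M : ℝ) + ∑ t, (C t * d t - B t * Real.exp (μ t + d t)) := by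
    intro d
    rw [hg]
    have e1 : (∑ i, ∑ w ∈ b i, r i w *
        (1 + (∑ t, Real.exp (μ t) * q w t * d t) / (∑ t, Real.exp (μ t) * q w t)
           - (∑ t, Real.exp (μ t + d t) * ∑ w' ∈ b i, q w' t) /
               (∑ t, Real.exp (μ t) * ∑ w' ∈ b i, q w' t)))
      = (∑ i, ∑ w ∈ b i, r i w)
        + (∑ i, ∑ w ∈ b i, ∑ t,
            r i w * (Real.exp (μ t) * q w t) / (∑ t', Real.exp (μ t') * q w t') * d t)
        - (∑ i, ∑ w ∈ b i, r i w *
            ((∑ t, Real.exp (μ t + d t) * ∑ w' ∈ b i, q w' t) /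
               (∑ t, Real.exp (μ t) * ∑ w' ∈ b i, q w' t))) := by
      rw [← Finset.sum_add_distrib, ← Finset.sum_sub_distrib]
      apply Finset.sum_congr rfl
      intro i _
      rw [← Finset.sum_add_distrib, ← Finset.sum_sub_distrib]
      apply Finset.sum_congr rfl
      intro w _
      rw [show (∑ t, r i w * (Real.exp (μ t) * q w t) / (∑ t', Real.exp (μ t') * q w t') * d t)
            = r i w * ((∑ t, Real.exp (μ t) * q w t * d t) / (∑ t, Real.exp (μ t) * q w t)) by
        rw [Finset.sum_div, Finset.mul_sum]
        exact Finset.sum_congr rfl fun t _ => by ring]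
      ring
    rw [e1]
    have e2 : (∑ i, ∑ w ∈ b i, r i w) = (M : ℝ) := by
      simp [hrsum]
    have e3 : (∑ i, ∑ w ∈ b i, ∑ t,
            r i w * (Real.exp (μ t) * q w t) / (∑ t', Real.exp (μ t') * q w t') * d t)
        = ∑ t, A t * d t := by
      calc (∑ i, ∑ w ∈ b i, ∑ t,
            r i w * (Real.exp (μ t) * q w t) / (∑ t', Real.exp (μ t') * q w t') * d t)
          = ∑ i, ∑ t, ∑ w ∈ b i,
            r i w * (Real.exp (μ t) * q w t) / (∑ t', Real.exp (μ t') * q w t') * d t :=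
            Finset.sum_congr rfl (fun i _ => Finset.sum_comm)
        _ = ∑ t, ∑ i, ∑ w ∈ b i,
            r i w * (Real.exp (μ t) * q w t) / (∑ t', Real.exp (μ t') * q w t') * d t :=
            Finset.sum_comm
        _ = ∑ t, A t * d t := by
            apply Finset.sum_congr rfl
            intro t _
            rw [hA, Finset.sum_mul]
            exact Finset.sum_congr rfl (fun i _ => (Finset.sum_mul _ _ _).symm)
    have e4 : (∑ i, ∑ w ∈ b i, r i w *
            ((∑ t, Real.exp (μ t + d t) * ∑ w' ∈ b i, q w' t) /
               (∑ t, Real.exp (μ t) * ∑ w' ∈ b i, q w' t)))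
        = ∑ t, Real.exp (μ t + d t) * B t := by
      have step1 : ∀ i : Fin M, (∑ w ∈ b i, r i w *
            ((∑ t, Real.exp (μ t + d t) * ∑ w' ∈ b i, q w' t) /
               (∑ t, Real.exp (μ t) * ∑ w' ∈ b i, q w' t)))
          = ∑ t, Real.exp (μ t + d t) * ((∑ w' ∈ b i, q w' t) /
               (∑ t', Real.exp (μ t') * ∑ w' ∈ b i, q w' t')) := by
        intro i
        rw [← Finset.sum_mul, hrsum i, one_mul, Finset.sum_div]
        exact Finset.sum_congr rfl (fun t _ => (mul_div_assoc _ _ _))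
      rw [Finset.sum_congr rfl (fun i _ => step1 i), Finset.sum_comm]
      apply Finset.sum_congr rfl
      intro t _
      rw [hB, Finset.mul_sum]
    rw [e2, e3, e4]
    have e5 : ∑ t, (C t * d t - B t * Real.exp (μ t + d t))
        = (∑ t, A t * d t) + (∑ t, κ * (1 - n * lamj t) * d t)
          - ∑ t, Real.exp (μ t + d t) * B t := by
      rw [← Finset.sum_add_distrib, ← Finset.sum_sub_distrib]
      apply Finset.sum_congr rfl
      intro t _
      simp only [hCdef]
      ring
    have e6 : κ * (∑ t, d t - n * ∑ t, lamj t * d t)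
        = ∑ t, κ * (1 - n * lamj t) * d t := by
      have hd : n * ∑ t, lamj t * d t = ∑ t, n * (lamj t * d t) := Finset.mul_sum _ _ _
      rw [hd, ← Finset.sum_sub_distrib, Finset.mul_sum]
      exact Finset.sum_congr rfl (fun t _ => by ring)
    rw [e5, e6]
    ring
  rw [key, key]
  refine add_le_add le_rfl ?_
  apply Finset.sum_le_sum
  intro t _
  have hc : 0 < C t := hpos t
  have hbt : 0 < B t := hBpos t
  have hexp : Real.exp (μ t + (Real.log (C t / B t) - μ t)) = C t / B t := by
    rw [show μ t + (Real.log (C t / B t) - μ t) = Real.log (C t / B t) from by ring,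
      Real.exp_log (div_pos hc hbt)]
  rw [hexp]
  have h1 := Real.add_one_le_exp (μ t + δ t - Real.log (C t / B t))
  have h2 : Real.exp (μ t + δ t - Real.log (C t / B t))
      = Real.exp (μ t + δ t) * (B t / C t) := by
    rw [Real.exp_sub, Real.exp_log (div_pos hc hbt)]
    field_simp
  rw [h2] at h1
  have h5 := mul_le_mul_of_nonneg_left h1 hc.le
  have h4 : C t * (Real.exp (μ t + δ t) * (B t / C t)) = Real.exp (μ t + δ t) * B t := by
    field_simp
  rw [h4] at h5
  have h3 : B t * (C t / B t) = C t := by field_simp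
  rw [h3]
  nlinarith [h5]
end
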